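/- Let δ₂ > 0 and a, b ≥ 0 with a + b = 3/2 + δ₂. Then there exists a constant C > 0 such that for all families of nonnegative reals (A_p)_{p∈ℤ³}, (B_p)_{p∈ℤ³}, (C_p)_{p∈ℤ³}, one has Σ_{k∈ℤ³} Σ_{p∈ℤ³} A_p B_{k−p} C_k ≤ C (Σ_p |p|^{2a} A_p²)^{1/2} (Σ_p |p|^{2b} B_p²)^{1/2} (Σ_p C_p²)^{1/2}, where by convention |p|^{2a} is interpreted with |0|^{2a} replaced by 1 (equivalently, using ⟨p⟩ = (1+|p|²)^{1/2} in place of |p|). -/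

import Mathlib

open scoped ENNReal
open MeasureTheory

/-- weight function -/
def wt (p : Fin 3 → ℤ) : ℝ := 1 + ∑ i, ((p i : ℝ)) ^ 2

lemma wt_def (p : Fin 3 → ℤ) : (1 + ∑ i, ((p i : ℝ)) ^ 2) = wt p := rfl

lemma wt_pos (p : Fin 3 → ℤ) : 0 < wt p := by
  have : (0:ℝ) ≤ ∑ i, ((p i : ℝ)) ^ 2 := by positivity
  unfold wt; linarith

lemma wt_one_le (p : Fin 3 → ℤ) : (1:ℝ) ≤ wt p := by
  have : (0:ℝ) ≤ ∑ i, ((p i : ℝ)) ^ 2 := by positivity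
  unfold wt; linarith

/-- Cauchy–Schwarz for `ℝ≥0∞`-valued tsums. -/
lemma cs_tsum {ι : Type*} [Countable ι] (f g : ι → ℝ≥0∞) :
    ∑' i, f i * g i ≤ (∑' i, f i ^ (2:ℝ)) ^ ((1:ℝ)/2) * (∑' i, g i ^ (2:ℝ)) ^ ((1:ℝ)/2) := by
  letI : MeasurableSpace ι := ⊤
  haveI : MeasurableSingletonClass ι := ⟨fun _ => trivial⟩
  have hf : Measurable f := measurable_from_top
  have hg : Measurable g := measurable_from_top
  have hpq : Real.HolderConjugate 2 2 := Real.holderConjugate_iff.mpr ⟨by norm_num, by norm_num⟩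
  have h := ENNReal.lintegral_mul_le_Lp_mul_Lq (Measure.count : Measure ι) hpq
    hf.aemeasurable hg.aemeasurable
  simpa [lintegral_count, Pi.mul_apply] using h

lemma single_summable (s : ℝ) (hs : 1/2 < s) :
    Summable (fun n : ℤ => (1 + (n : ℝ)^2) ^ (-s)) := by
  have hmaj : Summable (fun n : ℕ => (2:ℝ)^s * (1 / |(n:ℝ) + 1| ^ (2*s))) :=
    ((Real.summable_one_div_nat_add_rpow 1 (2*s)).mpr (by linarith)).mul_left _
  have key : ∀ n : ℕ, (1 + (n:ℝ)^2) ^ (-s) ≤ (2:ℝ)^s * (1 / |(n:ℝ) + 1| ^ (2*s)) := by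
    intro n
    have h1 : (0:ℝ) < 1 + (n:ℝ)^2 := by positivity
    have habs : |(n:ℝ) + 1| = (n:ℝ) + 1 := abs_of_pos (by positivity)
    have hsq : ((n:ℝ)+1)^(2*s) = (((n:ℝ)+1)^2)^s := by
      rw [← Real.rpow_natCast ((n:ℝ)+1) 2, ← Real.rpow_mul (by positivity)]
      norm_num [mul_comm]
    have hle : ((n:ℝ)+1)^2 ≤ 2 * (1 + (n:ℝ)^2) := by nlinarith [sq_nonneg ((n:ℝ) - 1)]
    have h2 : ((n:ℝ)+1)^(2*s) ≤ (2:ℝ)^s * (1 + (n:ℝ)^2)^s := by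
      rw [hsq, ← Real.mul_rpow (by norm_num) (le_of_lt h1)]
      exact Real.rpow_le_rpow (by positivity) hle (by linarith)
    have hp1 : (0:ℝ) < (1 + (n:ℝ)^2)^s := Real.rpow_pos_of_pos h1 _
    have hp2 : (0:ℝ) < ((n:ℝ)+1)^(2*s) := Real.rpow_pos_of_pos (by positivity) _
    rw [habs, Real.rpow_neg (le_of_lt h1), inv_eq_one_div, mul_one_div,
      div_le_div_iff₀ hp1 hp2]
    nlinarith
  have hnn : ∀ n : ℤ, (0:ℝ) ≤ (1 + (n:ℝ)^2) ^ (-s) :=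
    fun n => Real.rpow_nonneg (by positivity) _
  apply Summable.of_nat_of_neg
  · exact hmaj.of_nonneg_of_le (fun n => by exact_mod_cast hnn n) (fun n => by
      simpa using key n)
  · exact hmaj.of_nonneg_of_le (fun n => by exact_mod_cast hnn (-n)) (fun n => by
      push_cast
      simpa [neg_sq] using key n)

def e3 {α : Type*} : (Fin 3 → α) ≃ α × α × α where
  toFun p := (p 0, p 1, p 2)
  invFun x := ![x.1, x.2.1, x.2.2]
  left_inv p := by funext i; fin_cases i <;> rfl
  right_inv x := rfl

lemma tsum_pi3 (f : ℤ → ℝ≥0∞) :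
    ∑' p : Fin 3 → ℤ, (f (p 0) * f (p 1) * f (p 2)) = (∑' n, f n) ^ 3 := by
  rw [← Equiv.tsum_eq (e3 (α := ℤ)).symm fun p => f (p 0) * f (p 1) * f (p 2)]
  have : ∀ x : ℤ × ℤ × ℤ, (fun p : Fin 3 → ℤ => f (p 0) * f (p 1) * f (p 2)) (e3.symm x)
      = f x.1 * f x.2.1 * f x.2.2 := fun x => rfl
  simp_rw [this]
  rw [ENNReal.tsum_prod']
  simp_rw [ENNReal.tsum_prod', mul_assoc, ENNReal.tsum_mul_left, ENNReal.tsum_mul_right]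
  ring

lemma sum_lattice (t : ℝ) (ht : 3/2 < t) :
    (∑' p : Fin 3 → ℤ, ENNReal.ofReal (wt p ^ (-t))) ≠ ⊤ := by
  have ht3 : (1:ℝ)/2 < t/3 := by linarith
  set f : ℤ → ℝ≥0∞ := fun n => ENNReal.ofReal ((1 + (n:ℝ)^2) ^ (-(t/3))) with hf
  have hsingle : (∑' n : ℤ, f n) ≠ ⊤ := by
    rw [hf, ← ENNReal.ofReal_tsum_of_nonneg
      (fun n => Real.rpow_nonneg (by positivity) _) (single_summable (t/3) ht3)]
    exact ENNReal.ofReal_ne_top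
  have hterm : ∀ p : Fin 3 → ℤ,
      ENNReal.ofReal (wt p ^ (-t)) ≤ f (p 0) * f (p 1) * f (p 2) := by
    intro p
    have h0 : (0:ℝ) < 1 + (p 0:ℝ)^2 := by positivity
    have h1 : (0:ℝ) < 1 + (p 1:ℝ)^2 := by positivity
    have h2 : (0:ℝ) < 1 + (p 2:ℝ)^2 := by positivity
    have hQ : (0:ℝ) < wt p := wt_pos p
    set P : ℝ := (1 + (p 0:ℝ)^2) * (1 + (p 1:ℝ)^2) * (1 + (p 2:ℝ)^2) with hP
    set Q : ℝ := wt p with hQdef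
    have hPpos : 0 < P := by positivity
    have e : Q = 1 + ((p 0:ℝ)^2 + (p 1:ℝ)^2 + (p 2:ℝ)^2) := by
      rw [hQdef]; unfold wt; rw [Fin.sum_univ_three]
    have f0 : 1 + (p 0:ℝ)^2 ≤ Q := by rw [e]; nlinarith [sq_nonneg ((p 1:ℝ)), sq_nonneg ((p 2:ℝ))]
    have f1 : 1 + (p 1:ℝ)^2 ≤ Q := by rw [e]; nlinarith [sq_nonneg ((p 0:ℝ)), sq_nonneg ((p 2:ℝ))]
    have f2 : 1 + (p 2:ℝ)^2 ≤ Q := by rw [e]; nlinarith [sq_nonneg ((p 0:ℝ)), sq_nonneg ((p 1:ℝ))]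
    have hprod : P ≤ Q ^ 3 := by
      calc P ≤ Q * Q * Q := by
            apply mul_le_mul (mul_le_mul f0 f1 h1.le hQ.le) f2 h2.le (by positivity)
        _ = Q ^ 3 := by ring
    have hstep : P ^ (t/3) ≤ Q ^ t := by
      calc P ^ (t/3) ≤ (Q ^ 3) ^ (t/3) :=
            Real.rpow_le_rpow (le_of_lt hPpos) hprod (by linarith)
        _ = Q ^ t := by
            rw [← Real.rpow_natCast Q 3, ← Real.rpow_mul (le_of_lt hQ)]
            rw [show ((3:ℕ):ℝ) * (t/3) = t by push_cast; ring]
    have hmain : Q ^ (-t) ≤ P ^ (-(t/3)) := by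
      rw [Real.rpow_neg (le_of_lt hQ), Real.rpow_neg (le_of_lt hPpos)]
      exact inv_anti₀ (Real.rpow_pos_of_pos hPpos _) hstep
    have hsplit : P ^ (-(t/3)) = (1 + (p 0:ℝ)^2) ^ (-(t/3)) * (1 + (p 1:ℝ)^2) ^ (-(t/3))
        * (1 + (p 2:ℝ)^2) ^ (-(t/3)) := by
      rw [hP, Real.mul_rpow (by positivity) (le_of_lt h2),
        Real.mul_rpow (le_of_lt h0) (le_of_lt h1)]
    calc ENNReal.ofReal (Q ^ (-t)) ≤ ENNReal.ofReal (P ^ (-(t/3))) :=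
          ENNReal.ofReal_le_ofReal hmain
      _ = f (p 0) * f (p 1) * f (p 2) := by
          rw [hsplit, ENNReal.ofReal_mul (by positivity), ENNReal.ofReal_mul (by positivity)]
  have hle : (∑' p : Fin 3 → ℤ, ENNReal.ofReal (wt p ^ (-t)))
      ≤ (∑' n, f n) ^ 3 := (ENNReal.tsum_le_tsum hterm).trans_eq (tsum_pi3 f)
  exact ne_top_of_le_ne_top (ENNReal.pow_ne_top hsingle) hle

lemma weight_bound {a b : ℝ} (ha : 0 ≤ a) (hb : 0 ≤ b) {u v : ℝ} (hu : 1 ≤ u) (hv : 1 ≤ v) :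
    u ^ (-a) * v ^ (-b) ≤ u ^ (-(a+b)) + v ^ (-(a+b)) := by
  have hu0 : (0:ℝ) < u := lt_of_lt_of_le one_pos hu
  have hv0 : (0:ℝ) < v := lt_of_lt_of_le one_pos hv
  rcases le_total u v with h | h
  · have h1 : v ^ (-b) ≤ u ^ (-b) := Real.rpow_le_rpow_of_nonpos hu0 h (by linarith)
    have h2 : u ^ (-a) * v ^ (-b) ≤ u ^ (-a) * u ^ (-b) :=
      mul_le_mul_of_nonneg_left h1 (Real.rpow_nonneg hu0.le _)
    have h3 : u ^ (-a) * u ^ (-b) = u ^ (-(a+b)) := by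
      rw [← Real.rpow_add hu0]; ring_nf
    have h4 : (0:ℝ) ≤ v ^ (-(a+b)) := Real.rpow_nonneg hv0.le _
    linarith
  · have h1 : u ^ (-a) ≤ v ^ (-a) := Real.rpow_le_rpow_of_nonpos hv0 h (by linarith)
    have h2 : u ^ (-a) * v ^ (-b) ≤ v ^ (-a) * v ^ (-b) :=
      mul_le_mul_of_nonneg_right h1 (Real.rpow_nonneg hv0.le _)
    have h3 : v ^ (-a) * v ^ (-b) = v ^ (-(a+b)) := by
      rw [← Real.rpow_add hv0]; ring_nf
    have h4 : (0:ℝ) ≤ u ^ (-(a+b)) := Real.rpow_nonneg hu0.le _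
    linarith

lemma rpow_rpow_two {u : ℝ} (hu : 0 ≤ u) (c : ℝ) : (u ^ c) ^ (2:ℝ) = u ^ (2*c) := by
  rw [← Real.rpow_mul hu]; ring_nf

theorem stmt_4 (δ₂ a b : ℝ) (hδ : 0 < δ₂) (ha : 0 ≤ a) (hb : 0 ≤ b)
    (hab : a + b = 3 / 2 + δ₂) :
    ∃ C : ℝ, 0 < C ∧
      ∀ A B G : (Fin 3 → ℤ) → ℝ,
        (∀ p, 0 ≤ A p) → (∀ p, 0 ≤ B p) → (∀ p, 0 ≤ G p) →
        (∑' k : Fin 3 → ℤ, ∑' p : Fin 3 → ℤ, ENNReal.ofReal (A p * B (k - p) * G k)) ≤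
          ENNReal.ofReal C *
            (∑' p : Fin 3 → ℤ,
              ENNReal.ofReal ((1 + ∑ i, ((p i : ℝ)) ^ 2) ^ a * A p ^ 2)) ^ ((1:ℝ)/2) *
            (∑' p : Fin 3 → ℤ,
              ENNReal.ofReal ((1 + ∑ i, ((p i : ℝ)) ^ 2) ^ b * B p ^ 2)) ^ ((1:ℝ)/2) *
            (∑' p : Fin 3 → ℤ, ENNReal.ofReal (G p ^ 2)) ^ ((1:ℝ)/2) := by
  have hab' : (3:ℝ)/2 < a + b := by rw [hab]; linarith
  set S : ℝ≥0∞ := ∑' p : Fin 3 → ℤ, ENNReal.ofReal (wt p ^ (-(a+b))) with hS_def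
  have hS : S ≠ ⊤ := sum_lattice (a+b) hab'
  set M : ℝ≥0∞ := 2 * S with hM_def
  have hM : M ≠ ⊤ := by
    rw [hM_def]
    exact ENNReal.mul_ne_top (by norm_num) hS
  refine ⟨M.toReal ^ ((1:ℝ)/2) + 1, by positivity, ?_⟩
  intro A B G hA hB hG
  simp_rw [wt_def]
  -- notation for the three norms
  set Na : ℝ≥0∞ := ∑' p : Fin 3 → ℤ, ENNReal.ofReal (wt p ^ a * A p ^ 2) with hNa_def
  set Nb : ℝ≥0∞ := ∑' p : Fin 3 → ℤ, ENNReal.ofReal (wt p ^ b * B p ^ 2) with hNb_def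
  set NG : ℝ≥0∞ := ∑' p : Fin 3 → ℤ, ENNReal.ofReal (G p ^ 2) with hNG_def
  -- the inner convolution-type sums
  set T : (Fin 3 → ℤ) → ℝ≥0∞ := fun k => ∑' p : Fin 3 → ℤ,
    ENNReal.ofReal (wt p ^ a * A p ^ 2) * ENNReal.ofReal (wt (k - p) ^ b * B (k - p) ^ 2)
    with hT_def
  -- Step 1: inner Cauchy–Schwarz
  have hwnn : ∀ q : Fin 3 → ℤ, (0:ℝ) ≤ wt q := fun q => (wt_pos q).le
  have hrp : ∀ (q : Fin 3 → ℤ) (c : ℝ), (0:ℝ) ≤ wt q ^ c := fun q c => Real.rpow_nonneg (hwnn q) c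
  have hcs_inner : ∀ k : Fin 3 → ℤ, (∑' p : Fin 3 → ℤ, ENNReal.ofReal (A p * B (k - p))) ≤
      M ^ ((1:ℝ)/2) * (T k) ^ ((1:ℝ)/2) := by
    intro k
    set f : (Fin 3 → ℤ) → ℝ≥0∞ :=
      fun p => ENNReal.ofReal (wt p ^ (-(a/2)) * wt (k - p) ^ (-(b/2))) with hf
    set g : (Fin 3 → ℤ) → ℝ≥0∞ :=
      fun p => ENNReal.ofReal (wt p ^ (a/2) * A p * (wt (k - p) ^ (b/2) * B (k - p))) with hg
    have h1 : ∀ p, ENNReal.ofReal (A p * B (k - p)) = f p * g p := by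
      intro p
      rw [hf, hg]
      simp only []
      rw [← ENNReal.ofReal_mul (mul_nonneg (hrp _ _) (hrp _ _))]
      congr 1
      symm
      have c1 : wt p ^ (-(a/2)) * wt p ^ (a/2) = 1 := by
        rw [← Real.rpow_add (wt_pos p)]; simp
      have c2 : wt (k - p) ^ (-(b/2)) * wt (k - p) ^ (b/2) = 1 := by
        rw [← Real.rpow_add (wt_pos (k - p))]; simp
      calc wt p ^ (-(a/2)) * wt (k - p) ^ (-(b/2))
            * (wt p ^ (a/2) * A p * (wt (k - p) ^ (b/2) * B (k - p)))
          = (wt p ^ (-(a/2)) * wt p ^ (a/2)) * (wt (k - p) ^ (-(b/2)) * wt (k - p) ^ (b/2))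
            * (A p * B (k - p)) := by ring
        _ = A p * B (k - p) := by rw [c1, c2]; ring
    have hf2 : ∀ p, f p ^ (2:ℝ) = ENNReal.ofReal (wt p ^ (-a) * wt (k - p) ^ (-b)) := by
      intro p
      rw [hf]
      simp only []
      rw [ENNReal.ofReal_rpow_of_nonneg (mul_nonneg (hrp _ _) (hrp _ _)) (by norm_num)]
      congr 1
      rw [Real.mul_rpow (hrp _ _) (hrp _ _),
        rpow_rpow_two (wt_pos p).le, rpow_rpow_two (wt_pos (k - p)).le,
        show 2 * -(a/2) = -a by ring, show 2 * -(b/2) = -b by ring]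
    have hg2 : ∀ p, g p ^ (2:ℝ)
        = ENNReal.ofReal (wt p ^ a * A p ^ 2) * ENNReal.ofReal (wt (k - p) ^ b * B (k - p) ^ 2) := by
      intro p
      rw [hg]
      simp only []
      rw [ENNReal.ofReal_rpow_of_nonneg
        (mul_nonneg (mul_nonneg (hrp _ _) (hA p)) (mul_nonneg (hrp _ _) (hB _)))
        (by norm_num),
        ← ENNReal.ofReal_mul (mul_nonneg (hrp _ _) (sq_nonneg _))]
      congr 1
      have e1 : (wt p ^ (a/2)) ^ 2 = wt p ^ a := by
        rw [← Real.rpow_two, rpow_rpow_two (wt_pos p).le, show 2 * (a/2) = a by ring]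
      have e2 : (wt (k - p) ^ (b/2)) ^ 2 = wt (k - p) ^ b := by
        rw [← Real.rpow_two, rpow_rpow_two (wt_pos (k - p)).le, show 2 * (b/2) = b by ring]
      calc (wt p ^ (a/2) * A p * (wt (k - p) ^ (b/2) * B (k - p))) ^ (2:ℝ)
          = (wt p ^ (a/2)) ^ 2 * A p ^ 2 * ((wt (k - p) ^ (b/2)) ^ 2 * B (k - p) ^ 2) := by
            rw [Real.rpow_two]; ring
        _ = wt p ^ a * A p ^ 2 * (wt (k - p) ^ b * B (k - p) ^ 2) := by rw [e1, e2]
    have hsumf : ∑' p, f p ^ (2:ℝ) ≤ M := by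
      calc ∑' p, f p ^ (2:ℝ)
          = ∑' p : Fin 3 → ℤ, ENNReal.ofReal (wt p ^ (-a) * wt (k - p) ^ (-b)) := tsum_congr hf2
        _ ≤ ∑' p : Fin 3 → ℤ,
              (ENNReal.ofReal (wt p ^ (-(a+b))) + ENNReal.ofReal (wt (k - p) ^ (-(a+b)))) := by
            apply ENNReal.tsum_le_tsum
            intro p
            rw [← ENNReal.ofReal_add (hrp _ _) (hrp _ _)]
            exact ENNReal.ofReal_le_ofReal (weight_bound ha hb (wt_one_le p) (wt_one_le (k - p)))
        _ = S + S := by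
            rw [ENNReal.tsum_add]
            congr 1
            exact Equiv.tsum_eq (Equiv.subLeft k) (fun q => ENNReal.ofReal (wt q ^ (-(a+b))))
        _ = M := by rw [hM_def, two_mul]
    have hsumg : ∑' p, g p ^ (2:ℝ) = T k := by
      rw [hT_def]
      exact tsum_congr hg2
    calc ∑' p : Fin 3 → ℤ, ENNReal.ofReal (A p * B (k - p))
        = ∑' p, f p * g p := tsum_congr h1
      _ ≤ (∑' p, f p ^ (2:ℝ)) ^ ((1:ℝ)/2) * (∑' p, g p ^ (2:ℝ)) ^ ((1:ℝ)/2) := cs_tsum f g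
      _ ≤ M ^ ((1:ℝ)/2) * (T k) ^ ((1:ℝ)/2) := by
          rw [hsumg]
          exact mul_le_mul_left (ENNReal.rpow_le_rpow hsumf (by norm_num)) _
  -- Step 2: sum of T over k
  have hTsum : ∑' k : Fin 3 → ℤ, T k = Na * Nb := by
    rw [hT_def]
    simp only []
    rw [ENNReal.tsum_comm]
    calc ∑' (p : Fin 3 → ℤ) (k : Fin 3 → ℤ),
          ENNReal.ofReal (wt p ^ a * A p ^ 2) * ENNReal.ofReal (wt (k - p) ^ b * B (k - p) ^ 2)
        = ∑' p : Fin 3 → ℤ, ENNReal.ofReal (wt p ^ a * A p ^ 2)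
            * ∑' k : Fin 3 → ℤ, ENNReal.ofReal (wt (k - p) ^ b * B (k - p) ^ 2) := by
          exact tsum_congr fun p => ENNReal.tsum_mul_left
      _ = ∑' p : Fin 3 → ℤ, ENNReal.ofReal (wt p ^ a * A p ^ 2) * Nb := by
          apply tsum_congr
          intro p
          congr 1
          rw [hNb_def]
          exact Equiv.tsum_eq (Equiv.subRight p) (fun q => ENNReal.ofReal (wt q ^ b * B q ^ 2))
      _ = Na * Nb := by rw [hNa_def, ENNReal.tsum_mul_right]
  -- Step 3: outer Cauchy–Schwarz
  have hsplit : ∀ k : Fin 3 → ℤ,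
      (∑' p : Fin 3 → ℤ, ENNReal.ofReal (A p * B (k - p) * G k))
      = (∑' p : Fin 3 → ℤ, ENNReal.ofReal (A p * B (k - p))) * ENNReal.ofReal (G k) := by
    intro k
    rw [← ENNReal.tsum_mul_right]
    exact tsum_congr fun p => ENNReal.ofReal_mul (mul_nonneg (hA p) (hB (k - p)))
  have houter :
      (∑' k : Fin 3 → ℤ, ∑' p : Fin 3 → ℤ, ENNReal.ofReal (A p * B (k - p) * G k))
      ≤ (∑' k : Fin 3 → ℤ,
          ((∑' p : Fin 3 → ℤ, ENNReal.ofReal (A p * B (k - p)))) ^ (2:ℝ)) ^ ((1:ℝ)/2)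
        * NG ^ ((1:ℝ)/2) := by
    have hNG2 : ∑' k : Fin 3 → ℤ, (ENNReal.ofReal (G k)) ^ (2:ℝ) = NG := by
      rw [hNG_def]
      apply tsum_congr
      intro k
      rw [ENNReal.ofReal_rpow_of_nonneg (hG k) (by norm_num), Real.rpow_two]
    calc (∑' k : Fin 3 → ℤ, ∑' p : Fin 3 → ℤ, ENNReal.ofReal (A p * B (k - p) * G k))
        = ∑' k : Fin 3 → ℤ,
            (∑' p : Fin 3 → ℤ, ENNReal.ofReal (A p * B (k - p))) * ENNReal.ofReal (G k) :=
          tsum_congr hsplit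
      _ ≤ (∑' k : Fin 3 → ℤ,
            ((∑' p : Fin 3 → ℤ, ENNReal.ofReal (A p * B (k - p)))) ^ (2:ℝ)) ^ ((1:ℝ)/2)
          * (∑' k : Fin 3 → ℤ, (ENNReal.ofReal (G k)) ^ (2:ℝ)) ^ ((1:ℝ)/2) :=
          cs_tsum _ _
      _ = _ := by rw [hNG2]
  -- Step 4: bound the square sum
  have hsq : (∑' k : Fin 3 → ℤ,
      ((∑' p : Fin 3 → ℤ, ENNReal.ofReal (A p * B (k - p)))) ^ (2:ℝ)) ≤ M * (Na * Nb) := by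
    calc (∑' k : Fin 3 → ℤ,
          ((∑' p : Fin 3 → ℤ, ENNReal.ofReal (A p * B (k - p)))) ^ (2:ℝ))
        ≤ ∑' k : Fin 3 → ℤ, (M ^ ((1:ℝ)/2) * (T k) ^ ((1:ℝ)/2)) ^ (2:ℝ) := by
          apply ENNReal.tsum_le_tsum
          intro k
          exact ENNReal.rpow_le_rpow (hcs_inner k) (by norm_num)
      _ = ∑' k : Fin 3 → ℤ, M * T k := by
          apply tsum_congr
          intro k
          rw [ENNReal.mul_rpow_of_nonneg _ _ (by norm_num : (0:ℝ) ≤ 2),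
            ← ENNReal.rpow_mul, ← ENNReal.rpow_mul]
          norm_num
      _ = M * (Na * Nb) := by rw [ENNReal.tsum_mul_left, hTsum]
  -- Put everything together
  have hMC : M ^ ((1:ℝ)/2) ≤ ENNReal.ofReal (M.toReal ^ ((1:ℝ)/2) + 1) := by
    conv_lhs => rw [← ENNReal.ofReal_toReal hM]
    rw [ENNReal.ofReal_rpow_of_nonneg ENNReal.toReal_nonneg (by norm_num)]
    exact ENNReal.ofReal_le_ofReal (by linarith [Real.rpow_nonneg (ENNReal.toReal_nonneg (a := M)) ((1:ℝ)/2)])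
  calc (∑' k : Fin 3 → ℤ, ∑' p : Fin 3 → ℤ, ENNReal.ofReal (A p * B (k - p) * G k))
      ≤ (∑' k : Fin 3 → ℤ,
          ((∑' p : Fin 3 → ℤ, ENNReal.ofReal (A p * B (k - p)))) ^ (2:ℝ)) ^ ((1:ℝ)/2)
        * NG ^ ((1:ℝ)/2) := houter
    _ ≤ (M * (Na * Nb)) ^ ((1:ℝ)/2) * NG ^ ((1:ℝ)/2) :=
        mul_le_mul_left (ENNReal.rpow_le_rpow hsq (by norm_num)) _
    _ = M ^ ((1:ℝ)/2) * Na ^ ((1:ℝ)/2) * Nb ^ ((1:ℝ)/2) * NG ^ ((1:ℝ)/2) := by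
        rw [ENNReal.mul_rpow_of_nonneg M (Na * Nb) (by norm_num : (0:ℝ) ≤ 1/2),
          ENNReal.mul_rpow_of_nonneg Na Nb (by norm_num : (0:ℝ) ≤ 1/2)]
        ring
    _ ≤ ENNReal.ofReal (M.toReal ^ ((1:ℝ)/2) + 1) * Na ^ ((1:ℝ)/2) * Nb ^ ((1:ℝ)/2)
        * NG ^ ((1:ℝ)/2) := by
        exact mul_le_mul_left (mul_le_mul_left (mul_le_mul_left hMC _) _) _
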